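/- (Proposition 2, best response of an anchor node) Under the hypotheses making the anchor utility U_F strictly concave on the open interval I (a ≥ e, g > 2 on I, w₁, w₂ ∈ (0,1) with w₁ + w₂ = 1, E_tl, C, n, d, n_arx, S, P_sum > 0), suppose q* ∈ I is a critical point of U_F, i.e., U_F'(q*) = 0, and let g'(q*) > 0 be the derivative of g at q*. Then q* is the unique global maximizer of U_F on I, and it satisfies (q*)² · ( w₁·C − Z·g(q*)²·g'(q*) ) = w₂·E_tl·P_sum, where Z = (4·w₂·π·n·E_tl/d³)·(1/n_arx + 1/S). -/

import Mathlib

/-- The underwater acoustic transmit-power function Q(R) = A·R^k·a^R + Q₀. -/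
noncomputable def Qfun (A a k Q₀ : ℝ) : ℝ → ℝ := fun R => A * R ^ k * a ^ R + Q₀

/-- The follower (anchor node) utility (Eq. (10)):
U_F(q) = w₁·(E_tl − C·q)/E_tl + w₂·( (4π·n/(3d³))·(1/n_arx + 1/S)·g(q)³ − P_sum/q ). -/
noncomputable def UF (w₁ w₂ Etl C n d narx S Psum : ℝ) (g : ℝ → ℝ) : ℝ → ℝ :=
  fun q => w₁ * (Etl - C * q) / Etl +
    w₂ * ((4 * Real.pi * n / (3 * d ^ 3)) * (1 / narx + 1 / S) * (g q) ^ 3 - Psum / q)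

open Set

section Aux

lemma aux_rpow_succ {R : ℝ} (hR : 0 < R) (p : ℝ) : R ^ (p + 1) = R ^ p * R := by
  rw [Real.rpow_add hR, Real.rpow_one]

lemma Qfun_hasDerivAt {A a k Q₀ : ℝ} (ha : 0 < a) {R : ℝ} (hR : 0 < R) :
    HasDerivAt (Qfun A a k Q₀)
      (A * (k * R ^ (k - 1)) * a ^ R + A * R ^ k * (a ^ R * Real.log a)) R := by
  have h1 : HasDerivAt (fun x : ℝ => x ^ k) (k * R ^ (k - 1)) R :=
    Real.hasDerivAt_rpow_const (Or.inl hR.ne')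
  have h2 : HasDerivAt (fun x : ℝ => a ^ x) (a ^ R * Real.log a) R :=
    (Real.hasStrictDerivAt_const_rpow ha R).hasDerivAt
  exact ((h1.const_mul A).mul h2).add_const Q₀

lemma P_hasDerivAt {A a k : ℝ} (ha : 0 < a) {R : ℝ} (hR : 0 < R) :
    HasDerivAt (fun x : ℝ => A * (k * x ^ (k - 1)) * a ^ x + A * x ^ k * (a ^ x * Real.log a))
      (A * a ^ R * (k * (k - 1) * R ^ (k - 2) + 2 * k * Real.log a * R ^ (k - 1)
        + Real.log a ^ 2 * R ^ k)) R := by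
  have h0 : HasDerivAt (fun x : ℝ => x ^ (k - 1)) ((k - 1) * R ^ (k - 1 - 1)) R :=
    Real.hasDerivAt_rpow_const (Or.inl hR.ne')
  have h1 : HasDerivAt (fun x : ℝ => x ^ k) (k * R ^ (k - 1)) R :=
    Real.hasDerivAt_rpow_const (Or.inl hR.ne')
  have h2 : HasDerivAt (fun x : ℝ => a ^ x) (a ^ R * Real.log a) R :=
    (Real.hasStrictDerivAt_const_rpow ha R).hasDerivAt
  have hA := (((h0.const_mul k).const_mul A).mul h2).add
    ((h1.const_mul A).mul (h2.mul_const (Real.log a)))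
  refine hA.congr_deriv ?_
  have e : k - 1 - 1 = k - 2 := by ring
  have e1 : R ^ (k - 1) = R ^ (k - 2) * R := by
    have := aux_rpow_succ hR (k - 2); rw [show k - 2 + 1 = k - 1 by ring] at this; exact this
  have e2 : R ^ k = R ^ (k - 1) * R := by
    have := aux_rpow_succ hR (k - 1); rw [show k - 1 + 1 = k by ring] at this; exact this
  rw [e, e2, e1]; ring

lemma P_pos {A a k : ℝ} (hA : 0 < A) (ha : 0 < a) (hL : 1 ≤ Real.log a) (hk : 1 ≤ k)
    {R : ℝ} (hR : 0 < R) :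
    0 < A * (k * R ^ (k - 1)) * a ^ R + A * R ^ k * (a ^ R * Real.log a) := by
  have h1 : 0 < R ^ (k - 1) := Real.rpow_pos_of_pos hR _
  have h2 : 0 < R ^ k := Real.rpow_pos_of_pos hR _
  have h3 : 0 < a ^ R := Real.rpow_pos_of_pos ha _
  have hk0 : (0:ℝ) < k := by linarith
  have hL0 : (0:ℝ) < Real.log a := by linarith
  positivity

lemma key_ineq {A a k : ℝ} (hA : 0 < A) (ha : 0 < a) (hL : 1 ≤ Real.log a) (hk : 1 ≤ k)
    {R : ℝ} (hR2 : 2 < R) :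
    2 * (A * (k * R ^ (k - 1)) * a ^ R + A * R ^ k * (a ^ R * Real.log a))
      < R * (A * a ^ R * (k * (k - 1) * R ^ (k - 2) + 2 * k * Real.log a * R ^ (k - 1)
        + Real.log a ^ 2 * R ^ k)) := by
  set L := Real.log a with hLdef
  have hR0 : (0:ℝ) < R := by linarith
  have hu : 0 < R ^ (k - 2) := Real.rpow_pos_of_pos hR0 _
  have haR : 0 < a ^ R := Real.rpow_pos_of_pos ha R
  have e1 : R ^ (k - 1) = R ^ (k - 2) * R := by
    have := aux_rpow_succ hR0 (k - 2); rw [show k - 2 + 1 = k - 1 by ring] at this; exact this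
  have e2 : R ^ k = R ^ (k - 2) * R * R := by
    have := aux_rpow_succ hR0 (k - 1); rw [show k - 1 + 1 = k by ring] at this
    rw [this, e1]
  have hLR : 2 < L * R := by nlinarith
  have core : 2 * k + 2 * (L * R) < k * (k - 1) + 2 * k * (L * R) + (L * R) ^ 2 := by
    nlinarith [sq_nonneg (L * R - 2), mul_nonneg (sub_nonneg.mpr hk)
      (by linarith : (0:ℝ) ≤ L * R - 2)]
  have hfac : 0 < A * a ^ R * R ^ (k - 2) * R := by positivity
  rw [e1, e2]
  nlinarith [mul_lt_mul_of_pos_left core hfac]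

lemma hfun_hasDerivAt {A a k : ℝ} (hA : 0 < A) (ha : 0 < a) (hL : 1 ≤ Real.log a) (hk : 1 ≤ k)
    {R : ℝ} (hR : 0 < R) :
    HasDerivAt (fun x : ℝ => 3 * x ^ 2 *
        (A * (k * x ^ (k - 1)) * a ^ x + A * x ^ k * (a ^ x * Real.log a))⁻¹)
      (3 * (2 * R ^ 1) * (A * (k * R ^ (k - 1)) * a ^ R + A * R ^ k * (a ^ R * Real.log a))⁻¹
        + 3 * R ^ 2 * (-(A * a ^ R * (k * (k - 1) * R ^ (k - 2) + 2 * k * Real.log a * R ^ (k - 1)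
            + Real.log a ^ 2 * R ^ k))
          / (A * (k * R ^ (k - 1)) * a ^ R + A * R ^ k * (a ^ R * Real.log a)) ^ 2)) R := by
  have hPd := P_hasDerivAt (A := A) (k := k) ha hR
  have hP0 := P_pos hA ha hL hk hR
  have h := ((hasDerivAt_pow 2 R).const_mul 3).mul (hPd.inv hP0.ne')
  refine h.congr_deriv ?_
  norm_num

lemma hfun_strictAnti {A a k : ℝ} (hA : 0 < A) (ha : 0 < a) (hL : 1 ≤ Real.log a) (hk : 1 ≤ k) :
    StrictAntiOn (fun x : ℝ => 3 * x ^ 2 *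
      (A * (k * x ^ (k - 1)) * a ^ x + A * x ^ k * (a ^ x * Real.log a))⁻¹) (Ioi 2) := by
  apply strictAntiOn_of_deriv_neg (convex_Ioi 2)
  · intro R hR
    have hR0 : (0:ℝ) < R := lt_trans two_pos hR
    exact (hfun_hasDerivAt hA ha hL hk hR0).continuousAt.continuousWithinAt
  · intro R hR
    rw [interior_Ioi] at hR
    have hR2 : (2:ℝ) < R := hR
    have hR0 : (0:ℝ) < R := by linarith
    have hD := hfun_hasDerivAt hA ha hL hk hR0
    rw [hD.deriv]
    have hP0 := P_pos hA ha hL hk hR0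
    have key := key_ineq hA ha hL hk hR2
    set p := A * (k * R ^ (k - 1)) * a ^ R + A * R ^ k * (a ^ R * Real.log a) with hp
    set p' := A * a ^ R * (k * (k - 1) * R ^ (k - 2) + 2 * k * Real.log a * R ^ (k - 1)
            + Real.log a ^ 2 * R ^ k) with hp'
    have hE : 3 * (2 * R ^ 1) * p⁻¹ + 3 * R ^ 2 * (-p' / p ^ 2)
        = (6 * R * p - 3 * R ^ 2 * p') / p ^ 2 := by
      field_simp; ring
    rw [hE]
    apply div_neg_of_neg_of_pos _ (by positivity)
    nlinarith [mul_pos hR0 (sub_pos.mpr key)]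

lemma g_hasDerivAt {A a k Q₀ : ℝ} (hA : 0 < A) (ha : 0 < a) (hL : 1 ≤ Real.log a) (hk : 1 ≤ k)
    {g : ℝ → ℝ}
    (hginv : ∀ R : ℝ, 0 < R → g (Qfun A a k Q₀ R) = R)
    (hgQ : ∀ y : ℝ, Q₀ < y → Qfun A a k Q₀ (g y) = y)
    (hgmono : StrictMonoOn g (Set.Ioi Q₀))
    (hgpos : ∀ y : ℝ, Q₀ < y → 0 < g y)
    {y : ℝ} (hy : Q₀ < y) :
    HasDerivAt g
      (A * (k * g y ^ (k - 1)) * a ^ g y + A * g y ^ k * (a ^ g y * Real.log a))⁻¹ y := by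
  have hgy : 0 < g y := hgpos y hy
  have himg : g '' (Ioi Q₀) ∈ nhds (g y) := by
    refine Filter.mem_of_superset (Ioi_mem_nhds hgy) ?_
    intro R hR
    have hR0 : (0:ℝ) < R := hR
    have hQR : Q₀ < Qfun A a k Q₀ R := by
      have h1 : 0 < A * R ^ k * a ^ R :=
        mul_pos (mul_pos hA (Real.rpow_pos_of_pos hR0 k)) (Real.rpow_pos_of_pos ha R)
      show Q₀ < A * R ^ k * a ^ R + Q₀
      linarith
    exact ⟨Qfun A a k Q₀ R, hQR, hginv R hR0⟩
  have hcont : ContinuousAt g y :=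
    hgmono.continuousAt_of_image_mem_nhds (Ioi_mem_nhds hy) himg
  exact HasDerivAt.of_local_left_inverse hcont (Qfun_hasDerivAt ha hgy)
    (P_pos hA ha hL hk hgy).ne'
    (Filter.eventually_of_mem (Ioi_mem_nhds hy) (fun z hz => hgQ z hz))

lemma UF_hasDerivAt' (w₁ w₂ Etl C n d narx S Psum : ℝ) (g : ℝ → ℝ) {q gq' : ℝ}
    (hq : q ≠ 0) (hg : HasDerivAt g gq' q) :
    HasDerivAt (UF w₁ w₂ Etl C n d narx S Psum g)
      (-(w₁ * C) / Etl + w₂ * ((4 * Real.pi * n / (3 * d ^ 3)) * (1 / narx + 1 / S)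
        * (3 * g q ^ 2 * gq') + Psum * (q ^ 2)⁻¹)) q := by
  have t1 : HasDerivAt (fun x : ℝ => w₁ * (Etl - C * x) / Etl) (w₁ * (0 - C * 1) / Etl) q :=
    (((hasDerivAt_const q Etl).sub ((hasDerivAt_id q).const_mul C)).const_mul w₁).div_const Etl
  have t2 : HasDerivAt (fun x : ℝ => g x ^ 3) ((3 : ℕ) * g q ^ 2 * gq') q := by
    have := hg.pow 3
    norm_num at this
    exact this
  have t3 : HasDerivAt (fun x : ℝ => Psum / x) (Psum * (-(q ^ 2)⁻¹)) q := by
    have := (hasDerivAt_inv hq).const_mul Psum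
    simpa [div_eq_mul_inv] using this
  have h := t1.add
    (((t2.const_mul ((4 * Real.pi * n / (3 * d ^ 3)) * (1 / narx + 1 / S))).sub t3).const_mul w₂)
  refine h.congr_deriv ?_
  push_cast
  ring

end Aux

/-- Proposition 2, best response of an anchor node: a critical point q* ∈ I
of U_F is the unique global maximizer of U_F on I, and it satisfies
(q*)²·(w₁·C − Z·g(q*)²·g'(q*)) = w₂·E_tl·P_sum, with
Z = (4·w₂·π·n·E_tl/d³)·(1/n_arx + 1/S). -/
theorem stmt_10 (A a k Q₀ : ℝ) (hA : 0 < A) (ha : Real.exp 1 ≤ a) (hk : 1 ≤ k) (hQ₀ : 0 ≤ Q₀)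
    (g : ℝ → ℝ)
    (hginv : ∀ R : ℝ, 0 < R → g (Qfun A a k Q₀ R) = R)
    (hgQ : ∀ y : ℝ, Q₀ < y → Qfun A a k Q₀ (g y) = y)
    (hgmono : StrictMonoOn g (Set.Ioi Q₀))
    (hgpos : ∀ y : ℝ, Q₀ < y → 0 < g y)
    (I : Set ℝ) (hIsub : I ⊆ Set.Ioi Q₀) (hIopen : IsOpen I) (hIconv : Convex ℝ I)
    (hg2 : ∀ q ∈ I, 2 < g q)
    (w₁ w₂ : ℝ) (hw₁ : w₁ ∈ Set.Ioo (0 : ℝ) 1) (hw₂ : w₂ ∈ Set.Ioo (0 : ℝ) 1)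
    (hw : w₁ + w₂ = 1)
    (Etl C n d narx S Psum : ℝ) (hEtl : 0 < Etl) (hC : 0 < C) (hn : 0 < n) (hd : 0 < d)
    (hnarx : 0 < narx) (hS : 0 < S) (hPsum : 0 < Psum)
    (qstar : ℝ) (hqI : qstar ∈ I)
    (hcrit : deriv (UF w₁ w₂ Etl C n d narx S Psum g) qstar = 0)
    (g' : ℝ) (hgd : HasDerivAt g g' qstar) (hg' : 0 < g') :
    (∀ q ∈ I, q ≠ qstar →
      UF w₁ w₂ Etl C n d narx S Psum g q < UF w₁ w₂ Etl C n d narx S Psum g qstar) ∧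
    qstar ^ 2 * (w₁ * C -
        (4 * w₂ * Real.pi * n * Etl / d ^ 3) * (1 / narx + 1 / S) * (g qstar) ^ 2 * g') =
      w₂ * Etl * Psum := by
  have ha0 : (0:ℝ) < a := lt_of_lt_of_le (Real.exp_pos 1) ha
  have hL : 1 ≤ Real.log a := by
    rw [← Real.log_exp 1]
    exact Real.log_le_log (Real.exp_pos 1) ha
  have hq0 : ∀ q ∈ I, 0 < q := fun q hq => lt_of_le_of_lt hQ₀ (hIsub hq)
  have hKpos : 0 < (4 * Real.pi * n / (3 * d ^ 3)) * (1 / narx + 1 / S) := by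
    apply mul_pos
    · apply div_pos
      · have := Real.pi_pos; nlinarith
      · positivity
    · have h1 : 0 < 1 / narx := by positivity
      have h2 : 0 < 1 / S := by positivity
      linarith
  -- the derivative function of UF on I
  set D : ℝ → ℝ := fun q => -(w₁ * C) / Etl + w₂ * ((4 * Real.pi * n / (3 * d ^ 3))
      * (1 / narx + 1 / S)
      * (3 * g q ^ 2 * (A * (k * g q ^ (k - 1)) * a ^ g q
          + A * g q ^ k * (a ^ g q * Real.log a))⁻¹)
      + Psum * (q ^ 2)⁻¹) with hD
  have hUFd : ∀ q ∈ I, HasDerivAt (UF w₁ w₂ Etl C n d narx S Psum g) (D q) q := by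
    intro q hq
    exact UF_hasDerivAt' w₁ w₂ Etl C n d narx S Psum g (hq0 q hq).ne'
      (g_hasDerivAt hA ha0 hL hk hginv hgQ hgmono hgpos (hIsub hq))
  -- D is strictly antitone on I
  have hDanti : ∀ x ∈ I, ∀ y ∈ I, x < y → D y < D x := by
    intro x hx y hy hxy
    have hgx2 : (2:ℝ) < g x := hg2 x hx
    have hgy2 : (2:ℝ) < g y := hg2 y hy
    have hgxy : g x < g y := hgmono (hIsub hx) (hIsub hy) hxy
    have t1 := hfun_strictAnti hA ha0 hL hk hgx2 hgy2 hgxy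
    simp only at t1
    have hx0 : 0 < x := hq0 x hx
    have hy0 : 0 < y := hq0 y hy
    have t2 : (y ^ 2)⁻¹ < (x ^ 2)⁻¹ := by
      apply inv_strictAnti₀ (by positivity)
      nlinarith
    have s1 := mul_lt_mul_of_pos_left t1 hKpos
    have s2 := add_lt_add s1 (mul_lt_mul_of_pos_left t2 hPsum)
    have s3 := mul_lt_mul_of_pos_left s2 hw₂.1
    simp only [hD]
    linarith
  have hD0 : D qstar = 0 := by
    have := (hUFd qstar hqI).deriv
    rw [hcrit] at this
    exact this.symm
  constructor
  · -- qstar is the strict global max on I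
    intro q hq hne
    have hsub : ∀ {x y : ℝ}, x ∈ I → y ∈ I → Set.Icc x y ⊆ I := by
      intro x y hx hy
      exact hIconv.ordConnected.out hx hy
    rcases lt_or_gt_of_ne hne with hlt | hgt
    · -- q < qstar
      have hIcc : Set.Icc q qstar ⊆ I := hsub hq hqI
      obtain ⟨c, hc, hceq⟩ := exists_hasDerivAt_eq_slope
        (UF w₁ w₂ Etl C n d narx S Psum g) D hlt
        (fun z hz => ((hUFd z (hIcc hz)).continuousAt).continuousWithinAt)
        (fun z hz => hUFd z (hIcc (Set.Ioo_subset_Icc_self hz)))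
      have hcI : c ∈ I := hIcc (Set.Ioo_subset_Icc_self hc)
      have hDc : 0 < D c := by
        have := hDanti c hcI qstar hqI hc.2
        linarith [hD0 ▸ this]
      rw [hceq] at hDc
      have hden : 0 < qstar - q := by linarith
      have := (div_pos_iff.mp hDc)
      rcases this with ⟨hnum, _⟩ | ⟨_, hneg⟩
      · linarith
      · linarith
    · -- qstar < q
      have hIcc : Set.Icc qstar q ⊆ I := hsub hqI hq
      obtain ⟨c, hc, hceq⟩ := exists_hasDerivAt_eq_slope
        (UF w₁ w₂ Etl C n d narx S Psum g) D hgt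
        (fun z hz => ((hUFd z (hIcc hz)).continuousAt).continuousWithinAt)
        (fun z hz => hUFd z (hIcc (Set.Ioo_subset_Icc_self hz)))
      have hcI : c ∈ I := hIcc (Set.Ioo_subset_Icc_self hc)
      have hDc : D c < 0 := by
        have := hDanti qstar hqI c hcI hc.1
        linarith [hD0 ▸ this]
      rw [hceq] at hDc
      have hden : 0 < q - qstar := by linarith
      have := (div_neg_iff.mp hDc)
      rcases this with ⟨_, hneg⟩ | ⟨hnum, _⟩
      · linarith
      · linarith
  · -- the stationarity equation
    have hqs0 : 0 < qstar := hq0 qstar hqI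
    have hV := (UF_hasDerivAt' w₁ w₂ Etl C n d narx S Psum g hqs0.ne' hgd).deriv
    rw [hcrit] at hV
    have hV' : -(w₁ * C) / Etl + w₂ * ((4 * Real.pi * n / (3 * d ^ 3)) * (1 / narx + 1 / S)
        * (3 * g qstar ^ 2 * g') + Psum * (qstar ^ 2)⁻¹) = 0 := hV.symm
    have hd0 : d ≠ 0 := hd.ne'
    have hnarx0 : narx ≠ 0 := hnarx.ne'
    have hS0 : S ≠ 0 := hS.ne'
    have hEtl0 : Etl ≠ 0 := hEtl.ne'
    have hq0' : qstar ≠ 0 := hqs0.ne'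
    field_simp at hV' ⊢
    linarith [hV']
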